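/- Let c ≥ 2 be an integer and let G be a finite simple graph with mad(G) < 4 − 1/c and maximum degree Δ(G) ≥ 14c − 7. Then G² is 2Δ(G)-choosable: for every assignment of a list L(v) of at least 2Δ(G) colors to each vertex v, there is a proper coloring of G² choosing each vertex's color from its list. -/

import Mathlib

/-- The `p`-th power of a graph: vertices are adjacent iff distinct and at distance at most `p`. -/
def graphPow {V : Type*} (G : SimpleGraph V) (p : ℕ) : SimpleGraph V where
  Adj x y := x ≠ y ∧ G.Reachable x y ∧ G.dist x y ≤ p
  symm := by
    constructor
    rintro x y ⟨hxy, hr, hd⟩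
    exact ⟨hxy.symm, hr.symm, by rwa [SimpleGraph.dist_comm]⟩
  loopless := by constructor; rintro x ⟨h, -⟩; exact h rfl

/-- Maximum average degree: max over nonempty subgraphs of 2|E(H)|/|V(H)|. -/
noncomputable def mad {V : Type*} (G : SimpleGraph V) : ℝ :=
  sSup { x : ℝ | ∃ H : G.Subgraph, H.verts.Nonempty ∧
    x = 2 * H.edgeSet.ncard / H.verts.ncard }

/-- Coloring number: min over linear orders (injections into ℕ) of max back-closed-neighborhood size. -/
noncomputable def col {V : Type*} [Fintype V] (G : SimpleGraph V) : ℕ :=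
  sInf { n : ℕ | ∃ σ : V ↪ ℕ,
    ∀ x : V, ({ y : V | σ y ≤ σ x ∧ (y = x ∨ G.Adj x y) }).ncard ≤ n }

/-- Weak `k`-coloring number. -/
noncomputable def wcol {V : Type*} [Fintype V] (G : SimpleGraph V) (k : ℕ) : ℕ :=
  sInf { n : ℕ | ∃ σ : V ↪ ℕ, ∀ x : V,
    ({ y : V | σ y ≤ σ x ∧ ∃ P : G.Walk x y, P.length ≤ k ∧
        ∀ z ∈ P.support, σ y ≤ σ z }).ncard ≤ n }

/-- Arboricity: the minimum number of forests needed to cover all edges of `G`. -/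
noncomputable def arb {V : Type*} (G : SimpleGraph V) : ℕ :=
  sInf { n : ℕ | ∃ f : Fin n → SimpleGraph V, (∀ i, (f i).IsAcyclic ∧ f i ≤ G) ∧
    ∀ e ∈ G.edgeSet, ∃ i, e ∈ (f i).edgeSet }

/-- Out-weight of a vertex under a weighting of edge orientations. -/
def outWeight {V : Type*} [Fintype V] (G : SimpleGraph V) [DecidableRel G.Adj]
    (w : V → V → ℝ) (u : V) : ℝ :=
  ∑ v ∈ G.neighborFinset u, w u v

/-- `w` is a weak orientation of `G`. -/
def IsWeakOrientation {V : Type*} (G : SimpleGraph V) (w : V → V → ℝ) : Prop :=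
  ∀ u v, G.Adj u v → 0 ≤ w u v ∧ w u v + w v u = 1

/-- Maximum out-weight. -/
noncomputable def maxOutWeight {V : Type*} [Fintype V] [Nonempty V] (G : SimpleGraph V)
    [DecidableRel G.Adj] (w : V → V → ℝ) : ℝ :=
  Finset.univ.sup' Finset.univ_nonempty (outWeight G w)



open Finset

/-- Auxiliary: a walk of length `≤ 2` between distinct vertices gives adjacency or a middle
vertex. -/
private lemma adj_or_middle' {V : Type*} {G : SimpleGraph V} {u v : V} (hr : G.Reachable u v)
    (hd : G.dist u v ≤ 2) (hne : u ≠ v) : G.Adj u v ∨ ∃ w, G.Adj u w ∧ G.Adj w v := by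
  obtain ⟨p, hp⟩ := hr.exists_walk_length_eq_dist
  have hl : p.length ≤ 2 := by rw [hp]; exact hd
  cases p with
  | nil => exact absurd rfl hne
  | cons h q =>
    cases q with
    | nil => exact Or.inl h
    | cons h' q' =>
      cases q' with
      | nil => exact Or.inr ⟨_, h, h'⟩
      | cons h'' q'' => simp [SimpleGraph.Walk.length_cons] at hl

/-- Auxiliary double counting lemma. -/
private lemma dc' {V : Type*} [Fintype V] [DecidableEq V] (G : SimpleGraph V)
    [DecidableRel G.Adj] (A B : Finset V) (F : V → ℝ) :
    ∑ v ∈ A, ∑ u ∈ G.neighborFinset v ∩ B, F u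
      = ∑ u ∈ B, ((G.neighborFinset u ∩ A).card : ℝ) * F u := by
  have h1 : ∀ v : V, G.neighborFinset v ∩ B = B.filter (fun u => G.Adj v u) := by
    intro v; ext u
    simp [SimpleGraph.mem_neighborFinset, and_comm]
  have h2 : ∀ u : V, G.neighborFinset u ∩ A = A.filter (fun v => G.Adj v u) := by
    intro u; ext v
    simp [SimpleGraph.mem_neighborFinset, G.adj_comm, and_comm]
  calc ∑ v ∈ A, ∑ u ∈ G.neighborFinset v ∩ B, F u
      = ∑ v ∈ A, ∑ u ∈ B, if G.Adj v u then F u else 0 := by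
        refine Finset.sum_congr rfl fun v _ => ?_
        rw [h1 v, Finset.sum_filter]
    _ = ∑ u ∈ B, ∑ v ∈ A, if G.Adj v u then F u else 0 := Finset.sum_comm
    _ = ∑ u ∈ B, ((G.neighborFinset u ∩ A).card : ℝ) * F u := by
        refine Finset.sum_congr rfl fun u _ => ?_
        rw [h2 u, ← Finset.sum_filter, Finset.sum_const, nsmul_eq_mul]

private lemma basicfacts {γ : ℝ} (hγ : 2 ≤ γ) :
    0 < γ ∧ 0 < 1/γ ∧ 1/γ ≤ 1/2 ∧ γ * (4 - 1/γ) = 4 * γ - 1 := by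
  have h0 : (0:ℝ) < γ := by linarith
  refine ⟨h0, by positivity, ?_, ?_⟩
  · rw [div_le_div_iff₀ h0 (by norm_num)]; linarith
  · field_simp

private lemma ineq1' {γ D x : ℝ} (hγ : 2 ≤ γ) (hD : 14 * γ - 7 ≤ D) (hx2 : 2 ≤ x)
    (hxD : x ≤ D) :
    (2 * D - (4 - 1/γ)) / (D * (D - 1)) * (x - 1) ≤ 2 - (4 - 1/γ)/x := by
  obtain ⟨h0, h1, h2, h3⟩ := basicfacts hγ
  have hD21 : (21:ℝ) ≤ D := by linarith
  have hx0 : (0:ℝ) < x := by linarith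
  have hDD : (0:ℝ) < D * (D - 1) := by nlinarith
  set a : ℝ := 4 - 1/γ with ha
  have ha3 : 3 ≤ a := by rw [ha]; linarith
  have ha4 : a ≤ 4 := by rw [ha]; linarith
  -- key factor nonnegativity
  have hfac : 0 ≤ (2*D - a)*x - a*(D-1) := by
    have e : γ * ((2*D - a)*x - a*(D-1)) = (2*γ*D - 4*γ + 1)*x - (4*γ-1)*(D-1) := by
      linear_combination (-(x + D - 1)) * h3
    have hk : 0 ≤ 2*γ*D - 4*γ + 1 := by nlinarith
    have hkk : (2*γ*D - 4*γ + 1) * 2 ≤ (2*γ*D - 4*γ + 1) * x :=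
      mul_le_mul_of_nonneg_left hx2 hk
    have h5 : 0 ≤ γ * ((2*D - a)*x - a*(D-1)) := by
      rw [e]; nlinarith
    have := le_of_mul_le_mul_left (by linarith : γ * 0 ≤ γ * ((2*D - a)*x - a*(D-1))) h0
    linarith
  have h2ax : 2 - a/x = (2*x - a)/x := by field_simp
  rw [div_mul_eq_mul_div, h2ax, div_le_div_iff₀ hDD hx0]
  nlinarith [mul_nonneg (sub_nonneg.mpr hxD) hfac]

private lemma ineq2' {γ D : ℝ} (hγ : 2 ≤ γ) (hD : 14*γ - 7 ≤ D) :
    4 - 1/γ ≤ (2*D - (4 - 1/γ)) / (D*(D-1)) * (2*D - 3) := by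
  obtain ⟨h0, h1, h2, h3⟩ := basicfacts hγ
  have hD21 : (21:ℝ) ≤ D := by linarith
  have hDD : (0:ℝ) < D * (D - 1) := by nlinarith
  set a : ℝ := 4 - 1/γ with ha
  rw [div_mul_eq_mul_div, le_div_iff₀ hDD]
  have e : γ*((2*D - a)*(2*D-3) - a*(D*(D-1))) = D^2 - (10*γ - 1)*D + 12*γ - 3 := by
    linear_combination (-(D^2 + D - 3)) * h3
  have hpos : 0 ≤ D^2 - (10*γ - 1)*D + 12*γ - 3 := by
    nlinarith [mul_nonneg (by linarith : (0:ℝ) ≤ D) (by linarith : (0:ℝ) ≤ D - 10*γ + 1)]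
  have h5 : 0 ≤ γ * ((2*D - a)*(2*D-3) - a*(D*(D-1))) := by rw [e]; exact hpos
  have := le_of_mul_le_mul_left
    (by linarith : γ * 0 ≤ γ * ((2*D - a)*(2*D-3) - a*(D*(D-1)))) h0
  linarith

private lemma ineq3' {γ D x : ℝ} (hγ : 2 ≤ γ) (hD : 14*γ-7 ≤ D) (hx1 : 1 ≤ x) (hx3 : x ≤ 3) :
    (2*D - (4 - 1/γ))/(D*(D-1)) * (x-1) ≤ 1 := by
  obtain ⟨h0, h1, h2, h3⟩ := basicfacts hγ
  have hD21 : (21:ℝ) ≤ D := by linarith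
  have hDD : (0:ℝ) < D * (D - 1) := by nlinarith
  set a : ℝ := 4 - 1/γ with ha
  have ha3 : 3 ≤ a := by rw [ha]; linarith
  have ha4 : a ≤ 4 := by rw [ha]; linarith
  rw [div_mul_eq_mul_div, div_le_one hDD]
  nlinarith [mul_le_mul_of_nonneg_left (by linarith : x - 1 ≤ 2)
      (by linarith : (0:ℝ) ≤ 2*D - a)]

private lemma lam_nonneg' {γ D : ℝ} (hγ : 2 ≤ γ) (hD : 14 * γ - 7 ≤ D) :
    0 ≤ (2 * D - (4 - 1/γ)) / (D * (D - 1)) := by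
  obtain ⟨h0, h1, h2, h3⟩ := basicfacts hγ
  have hD21 : (21:ℝ) ≤ D := by linarith
  apply div_nonneg (by linarith) (by nlinarith)

open Finset in
open scoped Classical in
private lemma no_bad' {V : Type*} [Fintype V] (G : SimpleGraph V)
    [DecidableRel G.Adj] {c : ℕ} (hc : 2 ≤ c) (hmad : mad G < 4 - 1 / (c : ℝ))
    (hΔ : 14 * c - 7 ≤ G.maxDegree) (S : Finset V) (hS : S.Nonempty)
    (hbad : ∀ v ∈ S, 2 * G.maxDegree ≤
      ((S.erase v).filter (fun y => G.Reachable v y ∧ G.dist v y ≤ 2)).card) : False := by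
  set Δ := G.maxDegree with hΔdef
  -- numeric facts
  have hγ : (2:ℝ) ≤ (c:ℝ) := by exact_mod_cast hc
  have hγ0 : (0:ℝ) < (c:ℝ) := by linarith
  have hc7 : 7 ≤ 14 * c := by omega
  have hD : 14 * (c:ℝ) - 7 ≤ (Δ:ℝ) := by
    have h1 : ((14 * c - 7 : ℕ) : ℝ) ≤ (Δ:ℝ) := by exact_mod_cast hΔ
    rw [Nat.cast_sub hc7] at h1
    push_cast at h1
    linarith
  have hD21 : (21:ℝ) ≤ (Δ:ℝ) := by linarith
  set a : ℝ := 4 - 1/(c:ℝ) with hadef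
  have ha3 : 3 ≤ a := by
    obtain ⟨-, -, h2, -⟩ := basicfacts hγ
    rw [hadef]; linarith
  have ha4 : a ≤ 4 := by
    obtain ⟨-, h1, -, -⟩ := basicfacts hγ
    rw [hadef]; linarith
  set lam : ℝ := (2 * (Δ:ℝ) - a) / ((Δ:ℝ) * ((Δ:ℝ) - 1)) with hlamdef
  have hlam0 : 0 ≤ lam := lam_nonneg' hγ hD
  -- the function s and the set U₂
  set s : V → ℕ := fun u => (G.neighborFinset u ∩ S).card with hs0
  have hs : ∀ u, s u = (G.neighborFinset u ∩ S).card := fun u => by rw [hs0]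
  have hsmax : ∀ u, s u ≤ Δ := by
    intro u
    calc s u ≤ (G.neighborFinset u).card := card_le_card inter_subset_left
      _ = G.degree u := G.card_neighborFinset_eq_degree u
      _ ≤ Δ := G.degree_le_maxDegree u
  set U₂ : Finset V := univ.filter (fun u => u ∉ S ∧ 2 ≤ s u) with hU₂def
  have hU₂mem : ∀ u, u ∈ U₂ ↔ (u ∉ S ∧ 2 ≤ s u) := by
    intro u; rw [hU₂def]; simp
  have hdisj : Disjoint S U₂ := by
    rw [Finset.disjoint_left]
    intro x hx hx2
    exact ((hU₂mem x).mp hx2).1 hx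
  have hsU₂ : ∀ u ∈ U₂, 2 ≤ s u := fun u hu => ((hU₂mem u).mp hu).2
  have hsP : ∀ v ∈ S, ∀ u ∈ G.neighborFinset v ∩ S, 1 ≤ s u := by
    intro v hv u hu
    have hadj : G.Adj u v := ((G.mem_neighborFinset v u).mp (mem_inter.mp hu).1).symm
    have hvm : v ∈ G.neighborFinset u ∩ S :=
      mem_inter.mpr ⟨(G.mem_neighborFinset u v).mpr hadj, hv⟩
    rw [hs u]
    exact card_pos.mpr ⟨v, hvm⟩
  -- Step A : the local counting constraint, natural number version
  have stepA : ∀ v ∈ S, 2*Δ ≤ s v + ((∑ u ∈ G.neighborFinset v ∩ S, (s u - 1))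
      + ∑ u ∈ G.neighborFinset v ∩ U₂, (s u - 1)) := by
    intro v hv
    have hsub : ((S.erase v).filter (fun y => G.Reachable v y ∧ G.dist v y ≤ 2)) ⊆
        (G.neighborFinset v ∩ S) ∪ (G.neighborFinset v).biUnion
          (fun u => (G.neighborFinset u ∩ S).erase v) := by
      intro y hy
      obtain ⟨hy1, hr, hd⟩ := mem_filter.mp hy
      obtain ⟨hyv, hyS⟩ := mem_erase.mp hy1
      rcases adj_or_middle' hr hd (fun h => hyv h.symm) with hadj | ⟨w, hvw, hwy⟩
      · exact mem_union_left _ (mem_inter.mpr ⟨(G.mem_neighborFinset v y).mpr hadj, hyS⟩)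
      · refine mem_union_right _ (mem_biUnion.mpr ⟨w, (G.mem_neighborFinset v w).mpr hvw, ?_⟩)
        exact mem_erase.mpr ⟨hyv, mem_inter.mpr ⟨(G.mem_neighborFinset w y).mpr hwy, hyS⟩⟩
    have h1 : 2*Δ ≤ (G.neighborFinset v ∩ S).card
        + ∑ u ∈ G.neighborFinset v, ((G.neighborFinset u ∩ S).erase v).card := by
      refine le_trans (hbad v hv) (le_trans (card_le_card hsub) ?_)
      refine le_trans (card_union_le _ _) ?_
      exact Nat.add_le_add_left card_biUnion_le _
    have h2 : ∀ u ∈ G.neighborFinset v, ((G.neighborFinset u ∩ S).erase v).card = s u - 1 := by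
      intro u hu
      have hvmem : v ∈ G.neighborFinset u ∩ S := by
        refine mem_inter.mpr ⟨?_, hv⟩
        rw [G.mem_neighborFinset] at hu ⊢
        exact hu.symm
      rw [card_erase_of_mem hvmem, hs u]
    rw [Finset.sum_congr rfl h2] at h1
    -- split the sum over the neighborhood
    have e4 := Finset.sum_filter_add_sum_filter_not (G.neighborFinset v) (fun u => u ∈ S)
      (fun u => s u - 1)
    have e5 := Finset.sum_filter_add_sum_filter_not
      ((G.neighborFinset v).filter (fun u => ¬ u ∈ S)) (fun u => u ∈ U₂) (fun u => s u - 1)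
    have t1 : (G.neighborFinset v).filter (fun u => u ∈ S) = G.neighborFinset v ∩ S :=
      Finset.filter_mem_eq_inter
    have t2 : ((G.neighborFinset v).filter (fun u => ¬ u ∈ S)).filter (fun u => u ∈ U₂)
        = G.neighborFinset v ∩ U₂ := by
      ext u
      simp only [mem_filter, mem_inter]
      constructor
      · rintro ⟨⟨h1, -⟩, h2⟩; exact ⟨h1, h2⟩
      · rintro ⟨h1, h2⟩; exact ⟨⟨h1, ((hU₂mem u).mp h2).1⟩, h2⟩
    have t3 : ∑ u ∈ (((G.neighborFinset v).filter (fun u => ¬ u ∈ S)).filter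
        (fun u => ¬ u ∈ U₂)), (s u - 1) = 0 := by
      refine Finset.sum_eq_zero fun u hu => ?_
      have h := mem_filter.mp hu
      have huS : u ∉ S := (mem_filter.mp h.1).2
      have huU : u ∉ U₂ := h.2
      have : ¬ (2 ≤ s u) := fun h2 => huU ((hU₂mem u).mpr ⟨huS, h2⟩)
      omega
    rw [t1] at e4
    rw [t2, t3, add_zero] at e5
    have hsv : s v = (G.neighborFinset v ∩ S).card := hs v
    omega
  -- Step A, real version
  have stepAR : ∀ v ∈ S, 2*(Δ:ℝ) ≤ (s v : ℝ)
      + ((∑ u ∈ G.neighborFinset v ∩ S, ((s u:ℝ) - 1))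
        + ∑ u ∈ G.neighborFinset v ∩ U₂, ((s u:ℝ) - 1)) := by
    intro v hv
    have h := stepA v hv
    have e1 : ((∑ u ∈ G.neighborFinset v ∩ S, (s u - 1) : ℕ) : ℝ)
        = ∑ u ∈ G.neighborFinset v ∩ S, ((s u :ℝ) - 1) := by
      rw [Nat.cast_sum]
      refine Finset.sum_congr rfl fun u hu => ?_
      rw [Nat.cast_sub (hsP v hv u hu)]
      norm_num
    have e2 : ((∑ u ∈ G.neighborFinset v ∩ U₂, (s u - 1) : ℕ) : ℝ)
        = ∑ u ∈ G.neighborFinset v ∩ U₂, ((s u :ℝ) - 1) := by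
      rw [Nat.cast_sum]
      refine Finset.sum_congr rfl fun u hu => ?_
      have h1 : 1 ≤ s u := le_trans (by norm_num) (hsU₂ u (mem_inter.mp hu).2)
      rw [Nat.cast_sub h1]
      norm_num
    calc 2*(Δ:ℝ) = ((2*Δ : ℕ) : ℝ) := by push_cast; ring
      _ ≤ ((s v + ((∑ u ∈ G.neighborFinset v ∩ S, (s u - 1))
            + ∑ u ∈ G.neighborFinset v ∩ U₂, (s u - 1)) : ℕ) : ℝ) := by exact_mod_cast h
      _ = (s v : ℝ) + ((∑ u ∈ G.neighborFinset v ∩ S, ((s u:ℝ) - 1))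
            + ∑ u ∈ G.neighborFinset v ∩ U₂, ((s u:ℝ) - 1)) := by
          rw [Nat.cast_add, Nat.cast_add, e1, e2]
  -- the charge function g
  set g : V → ℝ := fun u => if 4 ≤ s u then 1 - a/(s u : ℝ) else 0 with hg1
  have hg : ∀ u, g u = if 4 ≤ s u then 1 - a/(s u : ℝ) else 0 := fun u => by rw [hg1]
  have hg0 : ∀ u, 0 ≤ g u := by
    intro u
    rw [hg u]
    split
    · rename_i h4
      have h4' : (4:ℝ) ≤ (s u : ℝ) := by exact_mod_cast h4
      have : a/(s u:ℝ) ≤ 1 := by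
        rw [div_le_one (by linarith)]; linarith
      linarith
    · exact le_refl _
  -- Step B : pointwise discharging inequality
  have stepB : ∀ v ∈ S, a + (s v : ℝ) * g v ≤
      (∑ u ∈ G.neighborFinset v ∩ S, (1 + g u))
        + ∑ u ∈ G.neighborFinset v ∩ U₂, (2 - a/(s u:ℝ)) := by
    intro v hv
    have hQ0 : ∀ u ∈ G.neighborFinset v ∩ U₂, (0:ℝ) ≤ 2 - a/(s u:ℝ) := by
      intro u hu
      have h2 : (2:ℝ) ≤ (s u:ℝ) := by exact_mod_cast hsU₂ u (mem_inter.mp hu).2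
      have : a/(s u:ℝ) ≤ 2 := by
        rw [div_le_iff₀ (by linarith)]; nlinarith
      linarith
    by_cases hv4 : 4 ≤ s v
    · have hsv0 : ((s v:ℝ)) ≠ 0 := by
        have : (4:ℝ) ≤ (s v:ℝ) := by exact_mod_cast hv4
        linarith
      have hlhs : a + (s v:ℝ) * g v = (s v : ℝ) := by
        rw [hg v, if_pos hv4]
        field_simp
        ring
      rw [hlhs]
      have h1 : (s v:ℝ) = ∑ u ∈ G.neighborFinset v ∩ S, (1:ℝ) := by
        rw [Finset.sum_const, nsmul_eq_mul, mul_one, hs v]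
      calc (s v:ℝ) = ∑ u ∈ G.neighborFinset v ∩ S, (1:ℝ) := h1
        _ ≤ ∑ u ∈ G.neighborFinset v ∩ S, (1 + g u) :=
            Finset.sum_le_sum fun u _ => by linarith [hg0 u]
        _ ≤ _ := le_add_of_nonneg_right (Finset.sum_nonneg hQ0)
    · push_neg at hv4
      have hgv : g v = 0 := by rw [hg v, if_neg (by omega)]
      rw [hgv, mul_zero, add_zero]
      have hP : ∀ u ∈ G.neighborFinset v ∩ S, lam * ((s u:ℝ) - 1) ≤ 1 + g u := by
        intro u hu
        by_cases h4 : 4 ≤ s u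
        · have e : 1 + g u = 2 - a/(s u:ℝ) := by rw [hg u, if_pos h4]; ring
          rw [e, hlamdef, hadef]
          exact ineq1' hγ hD (by exact_mod_cast (by omega : 2 ≤ s u))
            (by exact_mod_cast hsmax u)
        · have e : g u = 0 := by rw [hg u, if_neg h4]
          rw [e, add_zero]
          rw [hlamdef, hadef]
          exact ineq3' hγ hD (by exact_mod_cast hsP v hv u hu)
            (by exact_mod_cast (by omega : s u ≤ 3))
      have hQ : ∀ u ∈ G.neighborFinset v ∩ U₂, lam * ((s u:ℝ) - 1) ≤ 2 - a/(s u:ℝ) := by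
        intro u hu
        rw [hlamdef, hadef]
        exact ineq1' hγ hD (by exact_mod_cast hsU₂ u (mem_inter.mp hu).2)
          (by exact_mod_cast hsmax u)
      have hsv3 : (s v : ℝ) ≤ 3 := by exact_mod_cast (by omega : s v ≤ 3)
      calc a ≤ lam * (2*(Δ:ℝ) - 3) := by
              have := ineq2' hγ hD
              rw [← hadef, ← hlamdef] at this
              exact this
        _ ≤ lam * ((∑ u ∈ G.neighborFinset v ∩ S, ((s u:ℝ)-1))
              + ∑ u ∈ G.neighborFinset v ∩ U₂, ((s u:ℝ)-1)) := by
            apply mul_le_mul_of_nonneg_left ?_ hlam0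
            have := stepAR v hv
            linarith
        _ = (∑ u ∈ G.neighborFinset v ∩ S, lam * ((s u:ℝ)-1))
              + ∑ u ∈ G.neighborFinset v ∩ U₂, lam * ((s u:ℝ)-1) := by
            rw [mul_add, Finset.mul_sum, Finset.mul_sum]
        _ ≤ _ := add_le_add (Finset.sum_le_sum hP) (Finset.sum_le_sum hQ)
  -- Step C : global inequality by summing over S
  have stepC : a * ((S.card : ℝ) + (U₂.card : ℝ)) ≤
      (∑ v ∈ S, ((s v:ℝ) + ((G.neighborFinset v ∩ U₂).card : ℝ))) + ∑ u ∈ U₂, (s u:ℝ) := by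
    have hsum := Finset.sum_le_sum stepB
    -- rewrite left side
    have hLHS : ∑ v ∈ S, (a + (s v : ℝ) * g v)
        = a * (S.card : ℝ) + ∑ v ∈ S, (s v : ℝ) * g v := by
      rw [Finset.sum_add_distrib, Finset.sum_const, nsmul_eq_mul, mul_comm]
    -- rewrite right side
    have hRHS : ∑ v ∈ S, ((∑ u ∈ G.neighborFinset v ∩ S, (1 + g u))
          + ∑ u ∈ G.neighborFinset v ∩ U₂, (2 - a/(s u:ℝ)))
        = (∑ v ∈ S, ((s v:ℝ) + ((G.neighborFinset v ∩ U₂).card : ℝ)))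
          + ((∑ v ∈ S, ∑ u ∈ G.neighborFinset v ∩ S, g u)
            + ∑ v ∈ S, ∑ u ∈ G.neighborFinset v ∩ U₂, (1 - a/(s u:ℝ))) := by
      have e : ∀ v ∈ S, (∑ u ∈ G.neighborFinset v ∩ S, (1 + g u))
            + ∑ u ∈ G.neighborFinset v ∩ U₂, (2 - a/(s u:ℝ))
          = ((s v:ℝ) + ((G.neighborFinset v ∩ U₂).card : ℝ))
            + ((∑ u ∈ G.neighborFinset v ∩ S, g u)
              + ∑ u ∈ G.neighborFinset v ∩ U₂, (1 - a/(s u:ℝ))) := by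
        intro v _
        have e1 : ∑ u ∈ G.neighborFinset v ∩ S, (1 + g u)
            = (s v:ℝ) + ∑ u ∈ G.neighborFinset v ∩ S, g u := by
          rw [Finset.sum_add_distrib, Finset.sum_const, nsmul_eq_mul, mul_one, hs v]
        have e2 : ∑ u ∈ G.neighborFinset v ∩ U₂, (2 - a/(s u:ℝ))
            = ((G.neighborFinset v ∩ U₂).card : ℝ)
              + ∑ u ∈ G.neighborFinset v ∩ U₂, (1 - a/(s u:ℝ)) := by
          have : ∀ u ∈ G.neighborFinset v ∩ U₂, (2 - a/(s u:ℝ)) = 1 + (1 - a/(s u:ℝ)) := by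
            intro u _; ring
          rw [Finset.sum_congr rfl this, Finset.sum_add_distrib, Finset.sum_const,
            nsmul_eq_mul, mul_one]
        rw [e1, e2]; ring
      rw [Finset.sum_congr rfl e]
      simp only [Finset.sum_add_distrib]
      try ring
    -- double counting
    have dc2 : ∑ v ∈ S, ∑ u ∈ G.neighborFinset v ∩ S, g u = ∑ u ∈ S, (s u:ℝ) * g u := by
      rw [dc' G S S g]
      try exact Finset.sum_congr rfl fun u _ => by rw [hs u]
    have dc1 : ∑ v ∈ S, ∑ u ∈ G.neighborFinset v ∩ U₂, (1 - a/(s u:ℝ))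
        = ∑ u ∈ U₂, (s u:ℝ) * (1 - a/(s u:ℝ)) := by
      rw [dc' G S U₂ (fun u => 1 - a/(s u:ℝ))]
      try exact Finset.sum_congr rfl fun u _ => by rw [hs u]
    have hU₂sum : ∑ u ∈ U₂, (s u:ℝ) * (1 - a/(s u:ℝ)) = ∑ u ∈ U₂, ((s u:ℝ) - a) := by
      refine Finset.sum_congr rfl fun u hu => ?_
      have h2 : (0:ℝ) < (s u:ℝ) := by
        have h2' : 2 ≤ s u := hsU₂ u hu
        exact_mod_cast (by omega : 0 < s u)
      field_simp
    have hU₂sum2 : ∑ u ∈ U₂, ((s u:ℝ) - a) = (∑ u ∈ U₂, (s u:ℝ)) - a * (U₂.card : ℝ) := by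
      rw [Finset.sum_sub_distrib, Finset.sum_const, nsmul_eq_mul, mul_comm]
    rw [hLHS, hRHS, dc2, dc1, hU₂sum, hU₂sum2] at hsum
    linarith
  -- Step D : build the subgraph and contradict mad
  let R : V → V → Prop := fun x y => G.Adj x y ∧ ((x ∈ S ∧ y ∈ S ∪ U₂) ∨ (y ∈ S ∧ x ∈ S ∪ U₂))
  let H' : SimpleGraph V :=
    ⟨R, ⟨fun x y h => ⟨h.1.symm, h.2.elim (fun p => Or.inr p) (fun p => Or.inl p)⟩⟩,
      ⟨fun x h => G.loopless.irrefl x h.1⟩⟩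
  have hAdj : ∀ x y, H'.Adj x y ↔ (G.Adj x y ∧ ((x ∈ S ∧ y ∈ S ∪ U₂) ∨ (y ∈ S ∧ x ∈ S ∪ U₂))) :=
    fun _ _ => Iff.rfl
  have hdegS : ∀ v ∈ S, H'.degree v = s v + (G.neighborFinset v ∩ U₂).card := by
    intro v hv
    have hnbr : H'.neighborFinset v = (G.neighborFinset v ∩ S) ∪ (G.neighborFinset v ∩ U₂) := by
      ext u
      simp only [SimpleGraph.mem_neighborFinset, mem_union, mem_inter, hAdj]
      constructor
      · rintro ⟨hadj, hcase⟩
        rcases hcase with ⟨-, hu⟩ | ⟨huS, -⟩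
        · rcases hu with h | h
          · exact Or.inl ⟨hadj, h⟩
          · exact Or.inr ⟨hadj, h⟩
        · exact Or.inl ⟨hadj, huS⟩
      · rintro (⟨h1, h2⟩ | ⟨h1, h2⟩)
        · exact ⟨h1, Or.inl ⟨hv, Or.inl h2⟩⟩
        · exact ⟨h1, Or.inl ⟨hv, Or.inr h2⟩⟩
    have hdisj2 : Disjoint (G.neighborFinset v ∩ S) (G.neighborFinset v ∩ U₂) :=
      hdisj.mono inter_subset_right inter_subset_right
    rw [← H'.card_neighborFinset_eq_degree, hnbr, card_union_of_disjoint hdisj2, hs v]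
  have hdegU : ∀ u ∈ U₂, H'.degree u = s u := by
    intro u hu
    have huS : u ∉ S := ((hU₂mem u).mp hu).1
    have hnbr : H'.neighborFinset u = G.neighborFinset u ∩ S := by
      ext y
      simp only [SimpleGraph.mem_neighborFinset, mem_inter, hAdj]
      constructor
      · rintro ⟨hadj, hcase⟩
        rcases hcase with ⟨h1, -⟩ | ⟨h1, -⟩
        · exact absurd h1 huS
        · exact ⟨hadj, h1⟩
      · rintro ⟨h1, h2⟩
        exact ⟨h1, Or.inr ⟨h2, mem_union_right _ hu⟩⟩
    rw [← H'.card_neighborFinset_eq_degree, hnbr, hs u]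
  have hdeg0 : ∀ x, x ∉ S ∪ U₂ → H'.degree x = 0 := by
    intro x hx
    rw [← H'.card_neighborFinset_eq_degree, Finset.card_eq_zero]
    ext y
    simp only [SimpleGraph.mem_neighborFinset, hAdj, Finset.notMem_empty, iff_false]
    rintro ⟨-, ⟨h1, -⟩ | ⟨-, h2⟩⟩
    · exact hx (mem_union_left _ h1)
    · exact hx h2
  have hhand := H'.sum_degrees_eq_twice_card_edges
  have hsplit : ∑ x : V, H'.degree x = (∑ x ∈ S, H'.degree x) + ∑ x ∈ U₂, H'.degree x := by
    rw [← Finset.sum_union hdisj]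
    exact (Finset.sum_subset (Finset.subset_univ _) (fun x _ hx => hdeg0 x hx)).symm
  have hcount : a * (((S ∪ U₂).card : ℝ)) ≤ 2 * (H'.edgeFinset.card : ℝ) := by
    calc a * (((S ∪ U₂).card : ℝ)) = a * ((S.card : ℝ) + (U₂.card : ℝ)) := by
          rw [card_union_of_disjoint hdisj]; push_cast; ring
      _ ≤ (∑ v ∈ S, ((s v:ℝ) + ((G.neighborFinset v ∩ U₂).card : ℝ))) + ∑ u ∈ U₂, (s u:ℝ) :=
          stepC
      _ = (((∑ x ∈ S, H'.degree x) + ∑ x ∈ U₂, H'.degree x : ℕ) : ℝ) := by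
          rw [Nat.cast_add, Nat.cast_sum, Nat.cast_sum]
          congr 1
          · refine Finset.sum_congr rfl fun v hv => ?_
            rw [hdegS v hv]; push_cast; ring
          · refine Finset.sum_congr rfl fun u hu => ?_
            rw [hdegU u hu]
      _ = ((∑ x : V, H'.degree x : ℕ) : ℝ) := by rw [hsplit]
      _ = 2 * (H'.edgeFinset.card : ℝ) := by rw [hhand]; push_cast; ring
  -- the subgraph
  let Hsub : G.Subgraph :=
    { verts := ↑(S ∪ U₂)
      Adj := H'.Adj
      adj_sub := fun h => h.1
      edge_vert := by
        rintro x y ⟨-, ⟨h1, -⟩ | ⟨-, h2⟩⟩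
        · exact Finset.mem_coe.mpr (mem_union_left _ h1)
        · exact Finset.mem_coe.mpr h2
      symm := H'.symm }
  have hEedge : Hsub.edgeSet = H'.edgeSet := by
    ext e
    induction e using Sym2.ind with
    | _ x y => exact Iff.rfl
  have hvertsncard : Hsub.verts.ncard = (S ∪ U₂).card := Set.ncard_coe_finset _
  have hedgencard : Hsub.edgeSet.ncard = H'.edgeFinset.card := by
    rw [hEedge, Set.ncard_eq_toFinset_card']
    try rfl
  have hvpos : 0 < ((S ∪ U₂).card : ℝ) := by
    have : (S ∪ U₂).Nonempty := hS.mono subset_union_left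
    exact_mod_cast Finset.card_pos.mpr this
  have hmem : (2 * (Hsub.edgeSet.ncard : ℝ) / (Hsub.verts.ncard : ℝ)) ∈
      {x : ℝ | ∃ H : G.Subgraph, H.verts.Nonempty ∧ x = 2 * H.edgeSet.ncard / H.verts.ncard} := by
    refine ⟨Hsub, ?_, rfl⟩
    have : (S ∪ U₂).Nonempty := hS.mono subset_union_left
    exact (Finset.coe_nonempty).mpr this
  have hbdd : BddAbove {x : ℝ | ∃ H : G.Subgraph, H.verts.Nonempty ∧
      x = 2 * H.edgeSet.ncard / H.verts.ncard} := by
    refine ⟨2 * (G.edgeSet.ncard : ℝ), ?_⟩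
    rintro x ⟨H, hne, rfl⟩
    have hv1 : 1 ≤ (H.verts.ncard : ℝ) := by
      have : 0 < H.verts.ncard := (Set.ncard_pos (Set.toFinite _)).mpr hne
      exact_mod_cast this
    have he : (H.edgeSet.ncard : ℝ) ≤ (G.edgeSet.ncard : ℝ) := by
      exact_mod_cast Set.ncard_le_ncard H.edgeSet_subset (Set.toFinite _)
    have hd := div_le_self (by positivity : (0:ℝ) ≤ 2 * (H.edgeSet.ncard : ℝ)) hv1
    calc 2 * (H.edgeSet.ncard : ℝ) / (H.verts.ncard : ℝ) ≤ 2 * (H.edgeSet.ncard : ℝ) := hd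
      _ ≤ 2 * (G.edgeSet.ncard : ℝ) := by linarith
  have hx₀ : a ≤ 2 * (Hsub.edgeSet.ncard : ℝ) / (Hsub.verts.ncard : ℝ) := by
    rw [hvertsncard, hedgencard, le_div_iff₀ hvpos]
    exact hcount
  have hle : a ≤ mad G := le_trans hx₀ (le_csSup hbdd hmem)
  linarith [hmad, hle]

private lemma graphPow_adj' {V : Type*} (G : SimpleGraph V) (p : ℕ) (x y : V) :
    (graphPow G p).Adj x y ↔ (x ≠ y ∧ G.Reachable x y ∧ G.dist x y ≤ p) := Iff.rfl

open Finset in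
open scoped Classical in
private lemma greedy' {V : Type*} [Fintype V] (G : SimpleGraph V) [DecidableRel G.Adj]
    (L : V → Finset ℕ) (hL : ∀ v, 2 * G.maxDegree ≤ (L v).card)
    (hfind : ∀ S : Finset V, S.Nonempty → ∃ v ∈ S,
      ((S.erase v).filter (fun y => G.Reachable v y ∧ G.dist v y ≤ 2)).card < 2 * G.maxDegree)
    (S : Finset V) : ∃ f : V → ℕ, (∀ v ∈ S, f v ∈ L v) ∧
      ∀ u ∈ S, ∀ v ∈ S, (graphPow G 2).Adj u v → f u ≠ f v := by
  induction S using Finset.strongInduction with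
  | _ S ih =>
    rcases S.eq_empty_or_nonempty with rfl | hS
    · exact ⟨fun _ => 0, by simp, by simp⟩
    obtain ⟨v, hv, hcard⟩ := hfind S hS
    obtain ⟨f₀, hf₀L, hf₀⟩ := ih (S.erase v) (Finset.erase_ssubset hv)
    set Fb : Finset ℕ := ((S.erase v).filter (fun y => (graphPow G 2).Adj v y)).image f₀
      with hFb
    have hmono : (fun y => (graphPow G 2).Adj v y) ≤
        (fun y => G.Reachable v y ∧ G.dist v y ≤ 2) := by
      intro y hy
      rw [graphPow_adj'] at hy
      exact hy.2
    have hFbcard : Fb.card < (L v).card := by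
      calc Fb.card ≤ ((S.erase v).filter (fun y => (graphPow G 2).Adj v y)).card :=
            card_image_le
        _ ≤ ((S.erase v).filter (fun y => G.Reachable v y ∧ G.dist v y ≤ 2)).card :=
            card_le_card (Finset.monotone_filter_right _ (fun y _ hy => hmono y hy))
        _ < 2 * G.maxDegree := hcard
        _ ≤ (L v).card := hL v
    have hcol : ((L v) \ Fb).Nonempty := by
      rw [← Finset.card_pos]
      have h1 := Finset.le_card_sdiff Fb (L v)
      omega
    obtain ⟨col, hcolmem⟩ := hcol
    have hcolL : col ∈ L v := (Finset.mem_sdiff.mp hcolmem).1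
    have hcolF : col ∉ Fb := (Finset.mem_sdiff.mp hcolmem).2
    refine ⟨Function.update f₀ v col, ?_, ?_⟩
    · intro u hu
      by_cases h : u = v
      · subst h; rw [Function.update_self]; exact hcolL
      · rw [Function.update_of_ne h]; exact hf₀L u (mem_erase.mpr ⟨h, hu⟩)
    · intro u hu w hw hadj
      by_cases hu' : u = v <;> by_cases hw' : w = v
      · subst hu'; subst hw'
        rw [graphPow_adj'] at hadj
        exact absurd rfl hadj.1
      · subst hu'
        rw [Function.update_self, Function.update_of_ne hw']
        intro heq
        apply hcolF
        rw [heq]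
        exact Finset.mem_image_of_mem f₀
          (Finset.mem_filter.mpr ⟨mem_erase.mpr ⟨hw', hw⟩, hadj⟩)
      · subst hw'
        rw [Function.update_of_ne hu', Function.update_self]
        intro heq
        apply hcolF
        rw [← heq]
        exact Finset.mem_image_of_mem f₀
          (Finset.mem_filter.mpr ⟨mem_erase.mpr ⟨hu', hu⟩, hadj.symm⟩)
      · rw [Function.update_of_ne hu', Function.update_of_ne hw']
        exact hf₀ u (mem_erase.mpr ⟨hu', hu⟩) w (mem_erase.mpr ⟨hw', hw⟩) hadj

/-- Let c ≥ 2 and let G be a finite simple graph with mad(G) < 4 − 1/c and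
Δ(G) ≥ 14c − 7. Then G² is 2Δ(G)-choosable. -/
theorem stmt15 {V : Type*} [Fintype V] (G : SimpleGraph V) [DecidableRel G.Adj] (c : ℕ)
    (hc : 2 ≤ c) (hmad : mad G < 4 - 1 / (c : ℝ)) (hΔ : 14 * c - 7 ≤ G.maxDegree) :
    ∀ L : V → Finset ℕ, (∀ v, 2 * G.maxDegree ≤ (L v).card) →
      ∃ f : V → ℕ, (∀ v, f v ∈ L v) ∧
        ∀ u v : V, (graphPow G 2).Adj u v → f u ≠ f v := by
  classical
  intro L hL
  have hfind : ∀ S : Finset V, S.Nonempty → ∃ v ∈ S,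
      ((S.erase v).filter (fun y => G.Reachable v y ∧ G.dist v y ≤ 2)).card
        < 2 * G.maxDegree := by
    intro S hS
    by_contra h
    push_neg at h
    exact no_bad' G hc hmad hΔ S hS h
  obtain ⟨f, hfL, hf⟩ := greedy' G L hL hfind Finset.univ
  exact ⟨f, fun v => hfL v (Finset.mem_univ v),
    fun u v h => hf u (Finset.mem_univ u) v (Finset.mem_univ v) h⟩
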